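/- Permuted accessibility lemma. Let 1 ≤ j ≤ p ≤ n and let Π : ℝⁿ → ℝⁿ be the coordinate permutation Π(t_1,…,t_n) := (t_{p−j+1},…,t_p, t_1,…,t_{p−j}, t_{p+1},…,t_n). If Θ ⊆ ℝⁿ is a p-accessible open neighborhood of the origin, then Π⁻¹(Θ) = {t ∈ ℝⁿ : Π(t) ∈ Θ} is a (p−j)-accessible open neighborhood of the origin. -/
import Mathlib


/-- An open neighborhood `Θ ⊆ ℝⁿ` of the origin is `p`-accessible if for each
`t ∈ Θ` the piecewise linear path with vertices
`(0,…,0,t_{p+1},…,tₙ), (t₁,0,…,0,t_{p+1},…,tₙ), …, (t₁,…,tₙ)`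
(filling the first `p` coordinates one at a time) lies entirely in `Θ`.
Here (0-based) for `j < p` and `s ∈ [0,1]`, the point of the `j`-th segment keeps
coordinates `< j` of `t`, scales coordinate `j` by `s`, zeroes coordinates in
`(j, p)`, and keeps coordinates `≥ p`. -/
def PAccessible (n p : ℕ) (Θ : Set (Fin n → ℝ)) : Prop :=
  ∀ t ∈ Θ, ∀ j : ℕ, j < p → ∀ s ∈ Set.Icc (0 : ℝ) 1,
    (fun i : Fin n =>
      if i.val < j then t i
      else if i.val = j then s * t i
      else if i.val < p then 0
      else t i) ∈ Θ

/-- **Permuted accessibility lemma.**  Let `1 ≤ j ≤ p ≤ n` and let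
`Π : ℝⁿ → ℝⁿ` be the coordinate permutation
`Π(t₁,…,tₙ) = (t_{p−j+1},…,t_p, t₁,…,t_{p−j}, t_{p+1},…,tₙ)`.
If `Θ ⊆ ℝⁿ` is a `p`-accessible open neighborhood of the origin, then
`Π⁻¹(Θ)` is a `(p−j)`-accessible open neighborhood of the origin. -/
theorem permuted_accessibility
    (n p j : ℕ) (hj1 : 1 ≤ j) (hjp : j ≤ p) (hpn : p ≤ n)
    (Pi' : (Fin n → ℝ) → (Fin n → ℝ))
    (hPi : ∀ (t : Fin n → ℝ) (k : Fin n),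
      Pi' t k = if h1 : k.val < j then t ⟨k.val + (p - j), by omega⟩
        else if h2 : k.val < p then t ⟨k.val - j, by omega⟩
        else t k)
    (Θ : Set (Fin n → ℝ)) (hΘo : IsOpen Θ) (hΘ0 : (0 : Fin n → ℝ) ∈ Θ)
    (hΘacc : PAccessible n p Θ) :
    IsOpen (Pi' ⁻¹' Θ) ∧ (0 : Fin n → ℝ) ∈ Pi' ⁻¹' Θ ∧
      PAccessible n (p - j) (Pi' ⁻¹' Θ) := by
  have hcont : Continuous Pi' := by
    have hfun : Pi' = fun t (k : Fin n) =>
        if h1 : k.val < j then t ⟨k.val + (p - j), by omega⟩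
        else if h2 : k.val < p then t ⟨k.val - j, by omega⟩
        else t k := by
      funext t k; exact hPi t k
    rw [hfun]
    refine continuous_pi fun k => ?_
    split_ifs <;> exact continuous_apply _
  refine ⟨hcont.isOpen_preimage _ hΘo, ?_, ?_⟩
  · have h0 : Pi' 0 = 0 := by
      funext k; rw [hPi]; split_ifs <;> rfl
    simp [Set.mem_preimage, h0, hΘ0]
  · intro t ht m hm s hs
    have key : Pi' (fun i : Fin n =>
        if i.val < m then t i else if i.val = m then s * t i
        else if i.val < p - j then 0 else t i) =
        (fun i : Fin n =>
          if i.val < m + j then Pi' t i else if i.val = m + j then s * Pi' t i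
          else if i.val < p then 0 else Pi' t i) := by
      funext k
      simp only [hPi]
      split_ifs <;> first | rfl | omega
    show Pi' _ ∈ Θ
    rw [key]
    exact hΘacc (Pi' t) ht (m + j) (by omega) s hs
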